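/- Assume the standing hypotheses, let s = (x,y) ∈ S, let α, β ∈ ℕ₀ satisfy x = α·a + β·c with 0 ≤ α < c, and set δ = y − α·b − β·d (a nonnegative integer). Define T = ⌊β/a⌋ if x·b ≤ y·a, and T = δ if x·b ≥ y·a. Then the minimum and maximum of the set of factorization lengths L(s) are, as a pair, equal to the minimum and maximum of the two integers δ+α+β and δ+α+β + T·(c−a−1); i.e., L(s) has extreme values δ+α+β (attained at t = 0) and δ+α+β + T·(c−a−1) (attained at t = T), via the factorizations (δ−t, α+c·t, β−a·t). -/
import Mathlib

set_option maxHeartbeats 1000000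


/-- Standing hypotheses; s = (x,y) ∈ S, x = α·a + β·c with 0 ≤ α < c, and
δ = y − α·b − β·d a nonnegative integer.  With T = ⌊β/a⌋ if φ(s) ≤ a/b and
T = δ otherwise, the extreme factorization lengths of s are δ+α+β (at t = 0)
and δ+α+β + T·(c−a−1) (at t = T): the min and max of the length set L(s)
are the min and max of these two integers. -/
theorem embdim3_extreme_lengths (a b c d : ℕ) (ha : 0 < a) (hb : 0 < b) (hc : 0 < c)
    (hstar : b * c = a * d + 1) (x y : ℕ)
    (hs : (x, y) ∈ AddSubmonoid.closure
        ({((0 : ℕ), (1 : ℕ)), (a, b), (c, d)} : Set (ℕ × ℕ)))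
    (α β : ℕ) (hx : x = α * a + β * c) (hα : α < c)
    (δ : ℕ) (hδ : (δ : ℤ) = (y : ℤ) - α * b - β * d)
    (T : ℕ) (hT : T = if x * b ≤ y * a then β / a else δ)
    (L : Set ℕ)
    (hL : L = {ℓ : ℕ | ∃ p q r : ℕ,
      p • ((0 : ℕ), (1 : ℕ)) + q • ((a, b) : ℕ × ℕ) + r • ((c, d) : ℕ × ℕ) = (x, y) ∧
        p + q + r = ℓ}) :
    (((sInf L : ℕ) : ℤ) =
        min ((δ : ℤ) + α + β) ((δ : ℤ) + α + β + T * ((c : ℤ) - a - 1))) ∧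
      (((sSup L : ℕ) : ℤ) =
        max ((δ : ℤ) + α + β) ((δ : ℤ) + α + β + T * ((c : ℤ) - a - 1))) := by
  have ha' : (0:ℤ) < a := by exact_mod_cast ha
  have hc' : (0:ℤ) < c := by exact_mod_cast hc
  have hα' : (α:ℤ) < c := by exact_mod_cast hα
  have hstar' : (b:ℤ) * c = a * d + 1 := by exact_mod_cast hstar
  have hx' : (x:ℤ) = α * a + β * c := by exact_mod_cast hx
  -- key identity
  have key : (x:ℤ)*b + a*δ = y*a + β := by
    linear_combination (β:ℤ)*hstar' + (b:ℤ)*hx' + (a:ℤ)*hδ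
  have hTδ : T ≤ δ := by
    rw [hT]; split_ifs with h
    · have hβ : β ≤ a*δ := by
        have h' : (x:ℤ)*b ≤ y*a := by exact_mod_cast h
        have : (β:ℤ) ≤ a*δ := by linarith
        exact_mod_cast this
      calc β / a ≤ a*δ/a := Nat.div_le_div_right hβ
        _ = δ := Nat.mul_div_cancel_left _ ha
    · exact le_refl _
  have hTβ : a*T ≤ β := by
    rw [hT]; split_ifs with h
    · calc a * (β / a) ≤ a * β / a := Nat.mul_div_le_mul_div_assoc a β a
        _ = β := Nat.mul_div_cancel_left _ ha
    · have h' : (y:ℤ)*a < x*b := by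
        have := lt_of_not_ge h
        exact_mod_cast this
      have : (a:ℤ)*δ ≤ β := by linarith
      exact_mod_cast this
  have hTmax : ∀ t : ℕ, t ≤ δ → a*t ≤ β → t ≤ T := by
    intro t h1 h2
    rw [hT]; split_ifs with h
    · rw [Nat.le_div_iff_mul_le ha, mul_comm]; exact h2
    · exact h1
  -- characterization of L
  have hmem : ∀ ℓ : ℕ, ℓ ∈ L ↔ ∃ t : ℕ, t ≤ T ∧
      (ℓ:ℤ) = (δ:ℤ) + α + β + t * ((c:ℤ) - a - 1) := by
    intro ℓ
    rw [hL]
    constructor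
    · rintro ⟨p, q, r, heq, hlen⟩
      have h1 := congrArg Prod.fst heq
      have h2 := congrArg Prod.snd heq
      simp [smul_eq_mul] at h1 h2
      have h1' : (q:ℤ)*a + r*c = x := by exact_mod_cast h1
      have h2' : (p:ℤ) + q*b + r*d = y := by exact_mod_cast h2
      have hcop : IsCoprime (c:ℤ) (a:ℤ) := ⟨b, -d, by linear_combination hstar'⟩
      have hdvd : (c:ℤ) ∣ ((q:ℤ) - α) * a := ⟨(β:ℤ) - r, by linear_combination h1' + hx'⟩
      obtain ⟨t', ht'⟩ := hcop.dvd_of_dvd_mul_right hdvd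
      have hqpos : (0:ℤ) ≤ q := Int.natCast_nonneg q
      have ht'0 : 0 ≤ t' := by
        have hlt : (c:ℤ)*(-1) < c*t' := by nlinarith
        have := lt_of_mul_lt_mul_left hlt (le_of_lt hc')
        omega
      set t := t'.toNat with htdef
      have htt : (t:ℤ) = t' := Int.toNat_of_nonneg ht'0
      have hq : (q:ℤ) = α + c*t := by rw [htt]; linarith [ht']
      have hr : (r:ℤ) = β - a*t := by
        have hcc : (r:ℤ)*c = ((β:ℤ) - a*t)*c := by linear_combination h1' + hx' - (a:ℤ)*ht' + (a:ℤ)*(c:ℤ)*htt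
        exact mul_right_cancel₀ (ne_of_gt hc') hcc
      have hp : (p:ℤ) = δ - t := by linear_combination h2' - hδ - (b:ℤ)*hq - (d:ℤ)*hr - (t:ℤ)*hstar'
      have hta : a*t ≤ β := by
        have : (0:ℤ) ≤ r := Int.natCast_nonneg r
        have : (a*t:ℤ) ≤ β := by push_cast; linarith [hr]
        exact_mod_cast this
      have htδ : t ≤ δ := by
        have : (0:ℤ) ≤ p := Int.natCast_nonneg p
        have : (t:ℤ) ≤ δ := by linarith [hp]
        exact_mod_cast this
      refine ⟨t, hTmax t htδ hta, ?_⟩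
      have : (ℓ:ℤ) = p + q + r := by exact_mod_cast hlen.symm
      rw [this, hp, hq, hr]; ring
    · rintro ⟨t, ht, hval⟩
      have h1 : a*t ≤ β := le_trans (Nat.mul_le_mul_left a ht) hTβ
      have h2 : t ≤ δ := le_trans ht hTδ
      refine ⟨δ - t, α + c*t, β - a*t, ?_, ?_⟩
      · have e1 : (α + c*t)*a + (β - a*t)*c = x := by
          have : ((α + c*t)*a + (β - a*t)*c : ℤ) = x := by
            push_cast [Nat.cast_sub h1]
            linear_combination -hx'
          exact_mod_cast this
        have e2 : (δ - t) + (α + c*t)*b + (β - a*t)*d = y := by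
          have : ((δ - t) + (α + c*t)*b + (β - a*t)*d : ℤ) = y := by
            push_cast [Nat.cast_sub h1, Nat.cast_sub h2]
            linear_combination hδ + (t:ℤ)*hstar'
          exact_mod_cast this
        simp only [Prod.smul_mk, smul_eq_mul, Prod.mk_add_mk, Prod.mk.injEq, mul_zero,
          mul_one, zero_add]
        exact ⟨by linarith [e1], by linarith [e2]⟩
      · have : ((δ - t) + (α + c*t) + (β - a*t) : ℤ) = ℓ := by
          push_cast [Nat.cast_sub h1, Nat.cast_sub h2]
          linarith [hval]
        exact_mod_cast this
  -- the two extremes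
  set ℓ0 : ℕ := δ + α + β with hℓ0def
  set ℓT : ℕ := (δ - T) + (α + c*T) + (β - a*T) with hℓTdef
  have hℓ0Z : (ℓ0:ℤ) = (δ:ℤ) + α + β := by push_cast [hℓ0def]; ring
  have hℓTZ : (ℓT:ℤ) = (δ:ℤ) + α + β + T * ((c:ℤ) - a - 1) := by
    rw [hℓTdef]; push_cast [Nat.cast_sub hTβ, Nat.cast_sub hTδ]; ring
  have hℓ0 : ℓ0 ∈ L := (hmem ℓ0).2 ⟨0, Nat.zero_le _, by rw [hℓ0Z]; push_cast; ring⟩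
  have hℓT : ℓT ∈ L := (hmem ℓT).2 ⟨T, le_refl _, hℓTZ⟩
  have hlow : ∀ ℓ ∈ L, min ℓ0 ℓT ≤ ℓ := by
    intro ℓ hℓ
    obtain ⟨t, ht, hval⟩ := (hmem ℓ).1 hℓ
    rw [min_le_iff]
    rcases le_or_gt 0 ((c:ℤ) - a - 1) with hD | hD
    · left
      have : (ℓ0:ℤ) ≤ ℓ := by
        rw [hℓ0Z, hval]
        nlinarith [Int.natCast_nonneg t]
      exact_mod_cast this
    · right
      have : (ℓT:ℤ) ≤ ℓ := by
        rw [hℓTZ, hval]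
        have htZ : (t:ℤ) ≤ T := by exact_mod_cast ht
        nlinarith
      exact_mod_cast this
  have hhigh : ∀ ℓ ∈ L, ℓ ≤ max ℓ0 ℓT := by
    intro ℓ hℓ
    obtain ⟨t, ht, hval⟩ := (hmem ℓ).1 hℓ
    rw [le_max_iff]
    rcases le_or_gt 0 ((c:ℤ) - a - 1) with hD | hD
    · right
      have : (ℓ:ℤ) ≤ ℓT := by
        rw [hℓTZ, hval]
        have htZ : (t:ℤ) ≤ T := by exact_mod_cast ht
        nlinarith
      exact_mod_cast this
    · left
      have : (ℓ:ℤ) ≤ ℓ0 := by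
        rw [hℓ0Z, hval]
        nlinarith [Int.natCast_nonneg t]
      exact_mod_cast this
  have hne : L.Nonempty := ⟨ℓ0, hℓ0⟩
  have hbdd : BddAbove L := ⟨max ℓ0 ℓT, hhigh⟩
  have hinf : sInf L = min ℓ0 ℓT := by
    apply le_antisymm
    · rcases min_choice ℓ0 ℓT with h | h
      · rw [h]; exact Nat.sInf_le hℓ0
      · rw [h]; exact Nat.sInf_le hℓT
    · exact le_csInf hne hlow
  have hsup : sSup L = max ℓ0 ℓT := by
    apply le_antisymm
    · exact csSup_le hne hhigh
    · rcases max_choice ℓ0 ℓT with h | h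
      · rw [h]; exact le_csSup hbdd hℓ0
      · rw [h]; exact le_csSup hbdd hℓT
  rw [hinf, hsup]
  constructor
  · rw [Nat.cast_min, hℓ0Z, hℓTZ]
  · rw [Nat.cast_max, hℓ0Z, hℓTZ]
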